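/- If there exist a (K1,F1,Q1,S1) placement delivery array and a (K2,F2,Q2,S2) placement delivery array, then there exists a (K,F,Q,S) placement delivery array with K = K1·K2, F = F1·F2, Q = F1·Q2 + F2·Q1 − Q1·Q2, and S = S1·S2. -/
import Mathlib


open Finset

/-- A `(K, F, Q, S)` placement delivery array: an `F × K` array with entries in
`[S] ∪ {*}` (where `none` plays the role of `*`) satisfying conditions C1, C2, C3. -/
def IsPDA {K F S : ℕ} (Q : ℕ) (P : Fin F → Fin K → Option (Fin S)) : Prop :=
  -- C1: the symbol `*` appears exactly `Q` times in each column
  (∀ k : Fin K, (univ.filter fun j : Fin F => P j k = none).card = Q) ∧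
  -- C2: each integer `s ∈ [S]` occurs at least once in the array
  (∀ s : Fin S, ∃ j k, P j k = some s) ∧
  -- C3
  (∀ (j₁ j₂ : Fin F) (k₁ k₂ : Fin K) (s : Fin S), (j₁, k₁) ≠ (j₂, k₂) →
    P j₁ k₁ = some s → P j₂ k₂ = some s →
    j₁ ≠ j₂ ∧ k₁ ≠ k₂ ∧ P j₁ k₂ = none ∧ P j₂ k₁ = none)

/-- There exists a `(K, F, Q, S)` placement delivery array. -/
def ExistsPDA (K F Q S : ℕ) : Prop :=
  ∃ P : Fin F → Fin K → Option (Fin S), IsPDA Q P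

/-- **Direct product of PDAs.** If there exist a `(K1,F1,Q1,S1)` PDA and a
`(K2,F2,Q2,S2)` PDA, then there exists a `(K,F,Q,S)` PDA with `K = K1·K2`,
`F = F1·F2`, `Q = F1·Q2 + F2·Q1 - Q1·Q2`, and `S = S1·S2`. -/
theorem exists_pda_direct_product (K1 F1 Q1 S1 K2 F2 Q2 S2 : ℕ)
    (hK1 : 0 < K1) (hF1 : 0 < F1) (hQ1 : 0 < Q1) (hS1 : 0 < S1) (hQF1 : Q1 < F1)
    (hK2 : 0 < K2) (hF2 : 0 < F2) (hQ2 : 0 < Q2) (hS2 : 0 < S2) (hQF2 : Q2 < F2)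
    (h1 : ExistsPDA K1 F1 Q1 S1) (h2 : ExistsPDA K2 F2 Q2 S2) :
    ExistsPDA (K1 * K2) (F1 * F2) (F1 * Q2 + F2 * Q1 - Q1 * Q2) (S1 * S2) := by
  classical
  obtain ⟨P1, c11, c12, c13⟩ := h1
  obtain ⟨P2, c21, c22, c23⟩ := h2
  have eF : Fin F1 × Fin F2 ≃ Fin (F1 * F2) := finProdFinEquiv
  have eK : Fin K1 × Fin K2 ≃ Fin (K1 * K2) := finProdFinEquiv
  have eS : Fin S1 × Fin S2 ≃ Fin (S1 * S2) := finProdFinEquiv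
  set Pf : Fin (F1 * F2) → Fin (K1 * K2) → Option (Fin (S1 * S2)) :=
    fun j k => (P1 (eF.symm j).1 (eK.symm k).1).bind fun s1 =>
      (P2 (eF.symm j).2 (eK.symm k).2).map fun s2 => eS (s1, s2) with hPf
  -- entry characterizations
  have hnone_iff : ∀ j k, Pf j k = none ↔
      (P1 (eF.symm j).1 (eK.symm k).1 = none ∨ P2 (eF.symm j).2 (eK.symm k).2 = none) := by
    intro j k
    rcases hA : P1 (eF.symm j).1 (eK.symm k).1 with _ | a <;>
      rcases hB : P2 (eF.symm j).2 (eK.symm k).2 with _ | b <;>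
      simp [hPf, hA, hB]
  have hsome : ∀ j k s, Pf j k = some s →
      ∃ a b, P1 (eF.symm j).1 (eK.symm k).1 = some a ∧
        P2 (eF.symm j).2 (eK.symm k).2 = some b ∧ eS (a, b) = s := by
    intro j k s h
    rcases hA : P1 (eF.symm j).1 (eK.symm k).1 with _ | a <;>
      rcases hB : P2 (eF.symm j).2 (eK.symm k).2 with _ | b <;>
      simp [hPf, hA, hB] at h
    exact ⟨a, b, rfl, rfl, h⟩
  refine ⟨Pf, ?_, ?_, ?_⟩
  · -- C1
    intro k
    have hcard : (univ.filter fun j : Fin (F1 * F2) => Pf j k = none).card =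
        (univ.filter fun p : Fin F1 × Fin F2 =>
          P1 p.1 (eK.symm k).1 = none ∨ P2 p.2 (eK.symm k).2 = none).card := by
      refine Finset.card_equiv eF.symm ?_
      intro j
      simp only [mem_filter, mem_univ, true_and]
      exact hnone_iff j k
    rw [hcard]
    have hcompl : (univ.filter fun p : Fin F1 × Fin F2 =>
        ¬(P1 p.1 (eK.symm k).1 = none ∨ P2 p.2 (eK.symm k).2 = none)).card =
        (F1 - Q1) * (F2 - Q2) := by
      have hset : (univ.filter fun p : Fin F1 × Fin F2 =>
          ¬(P1 p.1 (eK.symm k).1 = none ∨ P2 p.2 (eK.symm k).2 = none)) =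
          (univ.filter fun a : Fin F1 => ¬ P1 a (eK.symm k).1 = none) ×ˢ
          (univ.filter fun b : Fin F2 => ¬ P2 b (eK.symm k).2 = none) := by
        rw [← Finset.filter_product, ← Finset.univ_product_univ]
        apply Finset.filter_congr
        intro p _
        simp [not_or]
      rw [hset, Finset.card_product]
      have e1 : (univ.filter fun a : Fin F1 => ¬ P1 a (eK.symm k).1 = none).card = F1 - Q1 := by
        have h := Finset.card_filter_add_card_filter_not
          (s := (univ : Finset (Fin F1))) (fun a => P1 a (eK.symm k).1 = none)
        rw [c11 (eK.symm k).1, Finset.card_univ, Fintype.card_fin] at h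
        omega
      have e2 : (univ.filter fun b : Fin F2 => ¬ P2 b (eK.symm k).2 = none).card = F2 - Q2 := by
        have h := Finset.card_filter_add_card_filter_not
          (s := (univ : Finset (Fin F2))) (fun b => P2 b (eK.symm k).2 = none)
        rw [c21 (eK.symm k).2, Finset.card_univ, Fintype.card_fin] at h
        omega
      rw [e1, e2]
    have htot := Finset.card_filter_add_card_filter_not
      (s := (univ : Finset (Fin F1 × Fin F2)))
      (fun p => P1 p.1 (eK.symm k).1 = none ∨ P2 p.2 (eK.symm k).2 = none)
    rw [hcompl, Finset.card_univ] at htot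
    simp only [Fintype.card_prod, Fintype.card_fin] at htot
    have hsub1 : (F1 - Q1) * (F2 - Q2) + (F1 * Q2 + F2 * Q1 - Q1 * Q2) = F1 * F2 := by
      have h1' : Q1 ≤ F1 := hQF1.le
      have h2' : Q2 ≤ F2 := hQF2.le
      have h3 : Q1 * Q2 ≤ F1 * Q2 + F2 * Q1 :=
        le_trans (Nat.mul_le_mul_right _ h1') (Nat.le_add_right _ _)
      zify [h1', h2', h3]
      ring
    omega
  · -- C2
    intro s
    obtain ⟨x, u, hx⟩ := c12 (eS.symm s).1
    obtain ⟨y, v, hy⟩ := c22 (eS.symm s).2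
    refine ⟨eF (x, y), eK (u, v), ?_⟩
    simp [hPf, hx, hy]
  · -- C3
    intro j₁ j₂ k₁ k₂ s hne hA hB
    obtain ⟨a₁, b₁, hA1, hA2, hAs⟩ := hsome _ _ _ hA
    obtain ⟨a₂, b₂, hB1, hB2, hBs⟩ := hsome _ _ _ hB
    have hab : a₁ = a₂ ∧ b₁ = b₂ := by
      have := eS.injective (hAs.trans hBs.symm)
      exact ⟨congrArg Prod.fst this, congrArg Prod.snd this⟩
    obtain ⟨rfl, rfl⟩ := hab
    by_cases hc : ((eF.symm j₁).1, (eK.symm k₁).1) = ((eF.symm j₂).1, (eK.symm k₂).1)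
    · -- first coordinates coincide; second coordinates must differ
      have hx1 : (eF.symm j₁).1 = (eF.symm j₂).1 := (Prod.ext_iff.1 hc).1
      have hu1 : (eK.symm k₁).1 = (eK.symm k₂).1 := (Prod.ext_iff.1 hc).2
      have hne2 : ((eF.symm j₁).2, (eK.symm k₁).2) ≠ ((eF.symm j₂).2, (eK.symm k₂).2) := by
        intro h
        apply hne
        have hj : eF.symm j₁ = eF.symm j₂ :=
          Prod.ext_iff.2 ⟨hx1, (Prod.ext_iff.1 h).1⟩
        have hk : eK.symm k₁ = eK.symm k₂ :=
          Prod.ext_iff.2 ⟨hu1, (Prod.ext_iff.1 h).2⟩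
        exact Prod.ext_iff.2 ⟨eF.symm.injective hj, eK.symm.injective hk⟩
      obtain ⟨hy, hv, hn1, hn2⟩ := c23 _ _ _ _ _ hne2 hA2 hB2
      refine ⟨?_, ?_, ?_, ?_⟩
      · intro h; exact hy (by rw [h])
      · intro h; exact hv (by rw [h])
      · exact (hnone_iff j₁ k₂).2 (Or.inr hn1)
      · exact (hnone_iff j₂ k₁).2 (Or.inr hn2)
    · obtain ⟨hx, hu, hn1, hn2⟩ := c13 _ _ _ _ _ hc hA1 hB1
      refine ⟨?_, ?_, ?_, ?_⟩
      · intro h; exact hx (by rw [h])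
      · intro h; exact hu (by rw [h])
      · exact (hnone_iff j₁ k₂).2 (Or.inl hn1)
      · exact (hnone_iff j₂ k₁).2 (Or.inl hn2)
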